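/- Let V be a p-dimensional vector space over an algebraically closed field F of characteristic coprime to the prime p, containing a primitive p-th root of unity ρ. Suppose α, β ∈ GL(V) satisfy αβ = ρβα, α^p = 1, β^p = 1. Then there is a basis v₀,…,v_{p−1} of V with α(v_i) = ρ^i v_i and β(v_i) = v_{i+1 mod p}. In particular α has p distinct eigenvalues 1, ρ, …, ρ^{p−1}, each with one-dimensional eigenspace. -/

import Mathlib

theorem stmt5 (F : Type*) [Field F] [IsAlgClosed F] (p : ℕ) (hp : p.Prime) [NeZero p]
    (hchar : (p : F) ≠ 0) (ρ : F) (hρ : IsPrimitiveRoot ρ p)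
    (V : Type*) [AddCommGroup V] [Module F V] [FiniteDimensional F V]
    (hdim : Module.finrank F V = p)
    (α β : Module.End F V) (hα : IsUnit α) (hβ : IsUnit β)
    (hcomm : α * β = ρ • (β * α)) (hαp : α ^ p = 1) (hβp : β ^ p = 1) :
    ∃ v : Module.Basis (Fin p) F V,
      (∀ i : Fin p, α (v i) = ρ ^ (i : ℕ) • v i) ∧
      (∀ i : Fin p, β (v i) = v (i + 1)) ∧
      (∀ i : Fin p, Module.finrank F (Module.End.eigenspace α (ρ ^ (i : ℕ))) = 1) := by
  have hppos : 0 < p := hp.pos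
  have : Nontrivial V := Module.nontrivial_of_finrank_pos (by rw [hdim]; exact hppos)
  -- α has an eigenvector
  obtain ⟨μ, hμ⟩ := Module.End.exists_eigenvalue α
  obtain ⟨u, hu⟩ := hμ.exists_hasEigenvector
  have huu : α u = μ • u := (Module.End.mem_eigenspace_iff).mp hu.1
  have hune : u ≠ 0 := hu.2
  -- β^n is injective since β^p = 1
  have hβinj : ∀ (n : ℕ) (x : V), (β ^ n) x = 0 → x = 0 := by
    intro n x hx
    have h1 : (β ^ (n * (p - 1))) ((β ^ n) x) = x := by
      rw [← Module.End.mul_apply, ← pow_add]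
      have he : n * (p - 1) + n = p * n := by
        cases p with
        | zero => omega
        | succ q => rw [Nat.succ_sub_one]; ring
      rw [he, pow_mul, hβp, one_pow]
      rfl
    rw [hx] at h1
    simp at h1
    exact h1.symm
  -- key commutation: α (β x) = ρ • β (α x)
  have hkey : ∀ x : V, α (β x) = ρ • β (α x) := by
    intro x
    have := congrArg (fun f : Module.End F V => f x) hcomm
    simpa using this
  -- general: if α x = c • x then α (β^n x) = (ρ^n * c) • β^n x
  have hgen : ∀ (c : F) (x : V), α x = c • x → ∀ n : ℕ, α ((β ^ n) x) = (ρ ^ n * c) • (β ^ n) x := by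
    intro c x hx n
    induction n with
    | zero => simpa using hx
    | succ n ih =>
      rw [pow_succ', Module.End.mul_apply, hkey, ih, map_smul, smul_smul]
      congr 1
      ring
  -- μ^p = 1
  have hμp : μ ^ p = 1 := by
    have h1 : ∀ n : ℕ, (α ^ n) u = μ ^ n • u := by
      intro n
      induction n with
      | zero => simp
      | succ n ih =>
        rw [pow_succ, Module.End.mul_apply, huu, map_smul, ih, smul_smul, pow_succ']
    have h1p := h1 p
    rw [hαp] at h1p
    have h2 : (μ ^ p - 1) • u = 0 := by
      rw [sub_smul, one_smul, ← h1p]; simp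
    rcases smul_eq_zero.mp h2 with h | h
    · exact sub_eq_zero.mp h
    · exact absurd h hune
  obtain ⟨k, hkp, hkμ⟩ := hρ.eq_pow_of_pow_eq_one hμp
  -- w : eigenvector with eigenvalue 1
  set w : V := (β ^ (p - k)) u with hwdef
  have hwne : w ≠ 0 := fun h => hune (hβinj _ _ h)
  have hαw : α w = (1 : F) • w := by
    have := hgen μ u huu (p - k)
    rw [hwdef, this, ← hkμ, ← pow_add]
    congr 2
    rw [Nat.sub_add_cancel hkp.le, hρ.pow_eq_one]
  -- the candidate basis vectors
  set v : Fin p → V := fun i => (β ^ (i : ℕ)) w with hvdef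
  have hαv : ∀ i : Fin p, α (v i) = ρ ^ (i : ℕ) • v i := by
    intro i
    have := hgen 1 w hαw (i : ℕ)
    simpa using this
  have hvne : ∀ i : Fin p, v i ≠ 0 := fun i h => hwne (hβinj _ _ h)
  have hinj : Function.Injective (fun i : Fin p => ρ ^ (i : ℕ)) := by
    intro i j hij
    exact Fin.ext (hρ.pow_inj i.isLt j.isLt hij)
  have hli : LinearIndependent F v := by
    refine Module.End.eigenvectors_linearIndependent' α (fun i : Fin p => ρ ^ (i : ℕ)) hinj v
      (fun i => ?_)
    rw [Module.End.hasEigenvector_iff]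
    exact ⟨Module.End.mem_eigenspace_iff.mpr (hαv i), hvne i⟩
  have : Nonempty (Fin p) := ⟨⟨0, hppos⟩⟩
  have hcard : Fintype.card (Fin p) = Module.finrank F V := by simp [hdim]
  set b : Module.Basis (Fin p) F V := basisOfLinearIndependentOfCardEqFinrank hli hcard with hbdef
  have hbv : ∀ i, b i = v i := by
    intro i
    rw [hbdef, coe_basisOfLinearIndependentOfCardEqFinrank]
  -- β shifts the basis
  have hβv : ∀ i : Fin p, β (b i) = b (i + 1) := by
    intro i
    rw [hbv, hbv, hvdef]
    show β ((β ^ (i : ℕ)) w) = (β ^ ((i + 1 : Fin p) : ℕ)) w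
    have h1 : ((i + 1 : Fin p) : ℕ) = ((i : ℕ) + 1) % p := by
      rw [Fin.add_def]
      congr 1
      simp [Fin.val_one', Nat.mod_eq_of_lt hp.one_lt]
    rw [h1, ← pow_eq_pow_mod _ hβp, pow_succ']
    rfl
  -- eigenspaces are one-dimensional
  have heig : ∀ i : Fin p, Module.End.eigenspace α (ρ ^ (i : ℕ)) = Submodule.span F {b i} := by
    intro i
    apply le_antisymm
    · intro x hx
      have hax : α x = ρ ^ (i : ℕ) • x := Module.End.mem_eigenspace_iff.mp hx
      -- coefficients of x in basis b
      have hrep : ∀ k : Fin p, ρ ^ (k : ℕ) * b.repr x k = ρ ^ (i : ℕ) * b.repr x k := by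
        intro k
        have e1 : α x = ∑ j : Fin p, (ρ ^ (j : ℕ) * b.repr x j) • b j := by
          conv_lhs => rw [← b.sum_repr x]
          rw [map_sum]
          refine Finset.sum_congr rfl fun j _ => ?_
          rw [map_smul, hbv, hαv j, ← hbv, smul_smul, mul_comm]
        have e2 : b.repr (α x) k = ρ ^ (k : ℕ) * b.repr x k := by
          rw [e1, map_sum]
          simp [Finsupp.single_apply]
        have e3 : b.repr (α x) k = ρ ^ (i : ℕ) * b.repr x k := by
          rw [hax, map_smul]
          simp
        rw [← e2, e3]
      have hzero : ∀ k : Fin p, k ≠ i → b.repr x k = 0 := by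
        intro k hk
        have h1 : (ρ ^ (k : ℕ) - ρ ^ (i : ℕ)) * b.repr x k = 0 := by
          rw [sub_mul, hrep k, sub_self]
        rcases mul_eq_zero.mp h1 with h | h
        · exact absurd (Fin.ext (hρ.pow_inj k.isLt i.isLt (sub_eq_zero.mp h))) hk
        · exact h
      have hxeq : x = b.repr x i • b i := by
        conv_lhs => rw [← b.sum_repr x]
        rw [Finset.sum_eq_single i]
        · intro j _ hj; rw [hzero j hj, zero_smul]
        · intro h; exact absurd (Finset.mem_univ i) h
      rw [hxeq]
      exact Submodule.smul_mem _ _ (Submodule.mem_span_singleton_self _)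
    · rw [Submodule.span_singleton_le_iff_mem]
      exact Module.End.mem_eigenspace_iff.mpr (by rw [hbv]; exact hαv i)
  refine ⟨b, fun i => by rw [hbv]; exact hαv i, hβv, fun i => ?_⟩
  rw [heig i, finrank_span_singleton (b.ne_zero i)]
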